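/- Define, for λ > 0, t ∈ [0,1), y > 0, θ ∈ [0,t]: Φ^{1,λ}(t,y) := (1/(2√2·y)) e^{λ²/2} ∫_{(y−λ)²/(2(1−t))}^{(y+λ)²/(2(1−t))} e^{−u} u^{−1/2} du, Φ^{2,λ}(t,y) := ((y−λ)/(√((1−t)³)·y)) e^{λ²/2} exp(−(y−λ)²/(2(1−t))), and Φ^λ(t,y,θ) := Φ^{1,λ}(t,y) + (1−θ)·max(0, Φ^{2,λ}(t,y)). Then there is a positive function c₂ on [0,1), bounded on every interval [0, 1−ε] with ε ∈ (0,1), such that for all λ > 0, t ∈ [0,1), 0 ≤ θ ≤ t, and all y > 0 with y ≠ λ: |∂_y Φ^λ(t,y,θ)| ≤ c₂(t) · (1 + λ²) · (y + 1/y) · exp(λ²/2) · exp(−(y−λ)²/(2(1−t))), where ∂_y denotes the derivative in the second variable (which exists for y ≠ λ). -/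

import Mathlib

open MeasureTheory Real

private lemma besContOn : ContinuousOn (fun u : ℝ => Real.exp (-u) / Real.sqrt u) (Set.Ioi 0) := by
  apply ContinuousOn.div
  · exact (Real.continuous_exp.comp continuous_neg).continuousOn
  · exact Real.continuous_sqrt.continuousOn
  · intro x hx; exact ne_of_gt (Real.sqrt_pos.mpr hx)

private lemma besInt {p q : ℝ} (hp : 0 < p) (hq : 0 < q) :
    IntervalIntegrable (fun u : ℝ => Real.exp (-u) / Real.sqrt u) volume p q := by
  apply (besContOn.mono ?_).intervalIntegrable
  intro x hx
  rcases Set.mem_uIcc.mp hx with ⟨h, _⟩ | ⟨h, _⟩ <;> · simp only [Set.mem_Ioi]; linarith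

private lemma besFTC {p x : ℝ} (hp : 0 < p) (hx : 0 < x) :
    HasDerivAt (fun r => ∫ u in p..r, Real.exp (-u) / Real.sqrt u)
      (Real.exp (-x) / Real.sqrt x) x := by
  apply intervalIntegral.integral_hasDerivAt_right (besInt hp hx)
  · exact ⟨Set.Ioi 0, Ioi_mem_nhds hx, besContOn.aestronglyMeasurable measurableSet_Ioi⟩
  · exact besContOn.continuousAt (Ioi_mem_nhds hx)

private lemma I_hasDeriv {lam s y : ℝ} (hlam : 0 < lam) (hs : 0 < s) (hy : 0 < y)
    (hne : y ≠ lam) :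
    HasDerivAt
      (fun z => ∫ u in (z - lam) ^ 2 / (2 * s)..(z + lam) ^ 2 / (2 * s),
        Real.exp (-u) / Real.sqrt u)
      (Real.exp (-((y + lam) ^ 2 / (2 * s))) / Real.sqrt ((y + lam) ^ 2 / (2 * s)) * ((y + lam) / s)
        - Real.exp (-((y - lam) ^ 2 / (2 * s))) / Real.sqrt ((y - lam) ^ 2 / (2 * s)) * ((y - lam) / s)) y := by
  have h0 : y - lam ≠ 0 := sub_ne_zero.mpr hne
  have hApos : 0 < (y - lam) ^ 2 / (2 * s) := by
    have : 0 < (y - lam) ^ 2 := lt_of_le_of_ne (sq_nonneg _) (Ne.symm (pow_ne_zero 2 h0))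
    positivity
  have hBpos : 0 < (y + lam) ^ 2 / (2 * s) := by
    have : 0 < (y + lam) ^ 2 := by positivity
    positivity
  have hA : HasDerivAt (fun z : ℝ => (z - lam) ^ 2 / (2 * s)) ((y - lam) / s) y := by
    have h := (((hasDerivAt_id y).sub_const lam).pow 2).div_const (2 * s)
    refine h.congr_deriv ?_
    simp only [id]
    field_simp
    ring
  have hB : HasDerivAt (fun z : ℝ => (z + lam) ^ 2 / (2 * s)) ((y + lam) / s) y := by
    have h := (((hasDerivAt_id y).add_const lam).pow 2).div_const (2 * s)
    refine h.congr_deriv ?_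
    simp only [id]
    field_simp
    ring
  have hG1 : HasDerivAt
      (fun z => ∫ u in (y - lam) ^ 2 / (2 * s)..(z + lam) ^ 2 / (2 * s),
        Real.exp (-u) / Real.sqrt u)
      (Real.exp (-((y + lam) ^ 2 / (2 * s))) / Real.sqrt ((y + lam) ^ 2 / (2 * s)) * ((y + lam) / s)) y :=
    by have := (besFTC hApos hBpos).comp y hB; exact this
  have hG2 : HasDerivAt
      (fun z => ∫ u in (y - lam) ^ 2 / (2 * s)..(z - lam) ^ 2 / (2 * s),
        Real.exp (-u) / Real.sqrt u)
      (Real.exp (-((y - lam) ^ 2 / (2 * s))) / Real.sqrt ((y - lam) ^ 2 / (2 * s)) * ((y - lam) / s)) y :=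
    by have := (besFTC hApos hApos).comp y hA; exact this
  refine (hG1.sub hG2).congr_of_eventuallyEq ?_
  have h1 : ∀ᶠ z in nhds y, z ≠ lam := eventually_ne_nhds hne
  have h2 : ∀ᶠ z in nhds y, z ≠ -lam := eventually_ne_nhds (by intro h; rw [h] at hy; linarith)
  filter_upwards [h1, h2] with z hz1 hz2
  have hAz : 0 < (z - lam) ^ 2 / (2 * s) := by
    have h0 : z - lam ≠ 0 := sub_ne_zero.mpr hz1
    have : 0 < (z - lam) ^ 2 := lt_of_le_of_ne (sq_nonneg _) (Ne.symm (pow_ne_zero 2 h0))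
    positivity
  have hBz : 0 < (z + lam) ^ 2 / (2 * s) := by
    have h0 : z + lam ≠ 0 := by intro h; exact hz2 (by linarith)
    have : 0 < (z + lam) ^ 2 := lt_of_le_of_ne (sq_nonneg _) (Ne.symm (pow_ne_zero 2 h0))
    positivity
  have key := intervalIntegral.integral_add_adjacent_intervals
    (besInt hApos hAz) (besInt hAz hBz)
  simp only [Pi.sub_apply]; linarith [key]

private lemma I_le {a b : ℝ} (ha : 0 < a) (hab : a ≤ b) :
    ∫ u in a..b, Real.exp (-u) / Real.sqrt u
      ≤ Real.exp (-a) * (2 * Real.sqrt b - 2 * Real.sqrt a) := by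
  have hb : 0 < b := lt_of_lt_of_le ha hab
  have h1 : ∫ u in a..b, Real.exp (-u) / Real.sqrt u
      ≤ ∫ u in a..b, Real.exp (-a) * u ^ (-(1/2) : ℝ) := by
    apply intervalIntegral.integral_mono_on hab (besInt ha hb) ?_ ?_
    · apply ContinuousOn.intervalIntegrable
      apply ContinuousOn.mul continuousOn_const
      apply ContinuousOn.rpow_const continuousOn_id
      intro x hx
      rw [Set.uIcc_of_le hab] at hx
      exact Or.inl (ne_of_gt (lt_of_lt_of_le ha hx.1))
    · intro x hx
      have hx0 : 0 < x := lt_of_lt_of_le ha hx.1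
      rw [Real.rpow_neg hx0.le, ← Real.sqrt_eq_rpow, div_eq_mul_inv]
      gcongr <;> first
        | positivity
        | linarith [hx.1]
  have h2 : ∫ u in a..b, Real.exp (-a) * u ^ (-(1/2) : ℝ)
      = Real.exp (-a) * ((b ^ ((1:ℝ)/2) - a ^ ((1:ℝ)/2)) / (1/2)) := by
    rw [intervalIntegral.integral_const_mul, integral_rpow (Or.inl (by norm_num))]
    norm_num
  calc ∫ u in a..b, Real.exp (-u) / Real.sqrt u
      ≤ ∫ u in a..b, Real.exp (-a) * u ^ (-(1/2) : ℝ) := h1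
    _ = Real.exp (-a) * ((b ^ ((1:ℝ)/2) - a ^ ((1:ℝ)/2)) / (1/2)) := h2
    _ = Real.exp (-a) * (2 * Real.sqrt b - 2 * Real.sqrt a) := by
        rw [← Real.sqrt_eq_rpow, ← Real.sqrt_eq_rpow]; ring

/-- `Φ^{1,λ}(t,y)`. -/
noncomputable def Phi1 (lam t y : ℝ) : ℝ :=
  1 / (2 * Real.sqrt 2 * y) * Real.exp (lam ^ 2 / 2) *
    ∫ u in (y - lam) ^ 2 / (2 * (1 - t))..(y + lam) ^ 2 / (2 * (1 - t)),
      Real.exp (-u) / Real.sqrt u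

/-- `Φ^{2,λ}(t,y)`. -/
noncomputable def Phi2 (lam t y : ℝ) : ℝ :=
  (y - lam) / (Real.sqrt ((1 - t) ^ 3) * y) * Real.exp (lam ^ 2 / 2) *
    Real.exp (-(y - lam) ^ 2 / (2 * (1 - t)))

/-- `Φ^λ(t,y,θ) = Φ^{1,λ}(t,y) + (1−θ)·max(0, Φ^{2,λ}(t,y))`. -/
noncomputable def Phi (lam t y θ : ℝ) : ℝ :=
  Phi1 lam t y + (1 - θ) * max 0 (Phi2 lam t y)

set_option maxHeartbeats 1600000 in
/-- bound on the `y`-derivative of `Φ^λ` away from `y = λ`: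
there is a positive function `c₂`, bounded on each `[0, 1−ε]`, such that for
`y > 0`, `y ≠ λ`, the derivative in `y` exists and
`|∂_y Φ^λ(t,y,θ)| ≤ c₂(t)(1+λ²)(y+1/y) e^{λ²/2} e^{−(y−λ)²/(2(1−t))}`. -/
theorem Phi_deriv_bound :
    ∃ c₂ : ℝ → ℝ,
      (∀ t ∈ Set.Ico (0 : ℝ) 1, 0 < c₂ t) ∧
      (∀ ε ∈ Set.Ioo (0 : ℝ) 1, ∃ M : ℝ, ∀ t ∈ Set.Icc (0 : ℝ) (1 - ε), c₂ t ≤ M) ∧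
      ∀ lam : ℝ, 0 < lam → ∀ t ∈ Set.Ico (0 : ℝ) 1, ∀ θ ∈ Set.Icc (0 : ℝ) t,
        ∀ y : ℝ, 0 < y → y ≠ lam →
          DifferentiableAt ℝ (fun z => Phi lam t z θ) y ∧
          |deriv (fun z => Phi lam t z θ) y| ≤
            c₂ t * (1 + lam ^ 2) * (y + 1 / y) * Real.exp (lam ^ 2 / 2) *
              Real.exp (-(y - lam) ^ 2 / (2 * (1 - t))) := by
  refine ⟨fun t => 8 / ((1 - t) ^ 2 * Real.sqrt (1 - t)), ?_, ?_, ?_⟩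
  · intro t ht
    have hs : 0 < 1 - t := by linarith [ht.2]
    have h1 : 0 < Real.sqrt (1 - t) := Real.sqrt_pos.mpr hs
    show (0:ℝ) < 8 / ((1 - t) ^ 2 * Real.sqrt (1 - t))
    positivity
  · intro ε hε
    refine ⟨8 / (ε ^ 2 * Real.sqrt ε), ?_⟩
    intro t ht
    have h1 : ε ≤ 1 - t := by linarith [ht.2]
    have hε0 : 0 < ε := hε.1
    have h2 : 0 < Real.sqrt ε := Real.sqrt_pos.mpr hε0
    show 8 / ((1 - t) ^ 2 * Real.sqrt (1 - t)) ≤ 8 / (ε ^ 2 * Real.sqrt ε)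
    apply div_le_div_of_nonneg_left (by norm_num) (by positivity)
    exact mul_le_mul (pow_le_pow_left₀ hε0.le h1 2) (Real.sqrt_le_sqrt h1)
      (Real.sqrt_nonneg _) (by positivity)
  · intro lam hlam t ht θ hθ y hy hne
    show DifferentiableAt ℝ (fun z => Phi lam t z θ) y ∧
      |deriv (fun z => Phi lam t z θ) y| ≤
        8 / ((1 - t) ^ 2 * Real.sqrt (1 - t)) * (1 + lam ^ 2) * (y + 1 / y) *
          Real.exp (lam ^ 2 / 2) * Real.exp (-(y - lam) ^ 2 / (2 * (1 - t)))

    have hs : 0 < 1 - t := by linarith [ht.2]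
    set u := Real.sqrt (1 - t) with hu_def
    have hu : 0 < u := Real.sqrt_pos.mpr hs
    have hu2 : u ^ 2 = 1 - t := Real.sq_sqrt hs.le
    have hu1 : u ≤ 1 := by rw [hu_def]; exact Real.sqrt_le_one.mpr (by linarith [ht.1])
    have hv1 : (1:ℝ) ≤ Real.sqrt 2 := by
      nlinarith [Real.sq_sqrt (by norm_num : (0:ℝ) ≤ 2), Real.sqrt_nonneg 2]
    have hv : 0 < Real.sqrt 2 := by linarith
    have h0 : y - lam ≠ 0 := sub_ne_zero.mpr hne
    have hsq : 0 < (y - lam) ^ 2 := lt_of_le_of_ne (sq_nonneg _) (Ne.symm (pow_ne_zero 2 h0))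
    have ha : 0 < (y - lam) ^ 2 / (2 * (1 - t)) := by positivity
    have hb : 0 < (y + lam) ^ 2 / (2 * (1 - t)) := by positivity
    have hab : (y - lam) ^ 2 / (2 * (1 - t)) ≤ (y + lam) ^ 2 / (2 * (1 - t)) := by
      exact (div_le_div_iff_of_pos_right (by positivity)).mpr (by nlinarith [mul_pos hy hlam])
    -- sqrt computations
    have hw : Real.sqrt (2 * (1 - t)) = Real.sqrt 2 * u := Real.sqrt_mul (by norm_num) _
    have hsa : Real.sqrt ((y - lam) ^ 2 / (2 * (1 - t))) = |y - lam| / (Real.sqrt 2 * u) := by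
      rw [Real.sqrt_div (sq_nonneg _), Real.sqrt_sq_eq_abs, hw]
    have hsb : Real.sqrt ((y + lam) ^ 2 / (2 * (1 - t))) = (y + lam) / (Real.sqrt 2 * u) := by
      rw [Real.sqrt_div (sq_nonneg _), Real.sqrt_sq_eq_abs, hw, abs_of_pos (by linarith)]
    -- abbreviations
    set E := Real.exp (lam ^ 2 / 2) with hE_def
    have hE : 0 < E := Real.exp_pos _
    set ea := Real.exp (-((y - lam) ^ 2 / (2 * (1 - t)))) with hea_def
    have hea : 0 < ea := Real.exp_pos _
    set Iy := ∫ x in (y - lam) ^ 2 / (2 * (1 - t))..(y + lam) ^ 2 / (2 * (1 - t)),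
        Real.exp (-x) / Real.sqrt x with hIy_def
    set DI := Real.exp (-((y + lam) ^ 2 / (2 * (1 - t)))) / Real.sqrt ((y + lam) ^ 2 / (2 * (1 - t))) * ((y + lam) / (1 - t))
          - ea / Real.sqrt ((y - lam) ^ 2 / (2 * (1 - t))) * ((y - lam) / (1 - t)) with hDI_def
    have hI : HasDerivAt (fun z => ∫ x in (z - lam) ^ 2 / (2 * (1 - t))..(z + lam) ^ 2 / (2 * (1 - t)),
        Real.exp (-x) / Real.sqrt x) DI y := I_hasDeriv hlam hs hy hne
    have hpre : HasDerivAt (fun z : ℝ => 1 / (2 * Real.sqrt 2 * z) * E) (-(E / (2 * Real.sqrt 2 * y ^ 2))) y := by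
      have h := ((hasDerivAt_const y (1:ℝ)).div ((hasDerivAt_id y).const_mul (2 * Real.sqrt 2))
        (by positivity)).mul_const E
      refine h.congr_deriv ?_
      simp only [id]
      field_simp
      ring
    have hPhi1 : HasDerivAt (fun z => Phi1 lam t z)
        (-(E / (2 * Real.sqrt 2 * y ^ 2)) * Iy + 1 / (2 * Real.sqrt 2 * y) * E * DI) y := by
      have h := hpre.mul hI
      exact h
    -- bound on Iy
    have hIy0 : 0 ≤ Iy := intervalIntegral.integral_nonneg hab (fun x hx => by positivity)
    have hIy4 : Iy ≤ 4 * y * ea / u := by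
      have h1 := I_le ha hab
      have h2 : 2 * Real.sqrt ((y + lam) ^ 2 / (2 * (1 - t))) -
          2 * Real.sqrt ((y - lam) ^ 2 / (2 * (1 - t))) ≤ 4 * y / u := by
        rw [hsa, hsb]
        have e1 : 2 * ((y + lam) / (Real.sqrt 2 * u)) - 2 * (|y - lam| / (Real.sqrt 2 * u))
            = (2 * (y + lam) - 2 * |y - lam|) / (Real.sqrt 2 * u) := by ring
        rw [e1]
        have hle : lam - y ≤ |y - lam| := by
          have := neg_abs_le (y - lam); linarith
        calc (2 * (y + lam) - 2 * |y - lam|) / (Real.sqrt 2 * u) ≤ (4 * y) / (Real.sqrt 2 * u) := by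
              gcongr
              linarith
          _ ≤ 4 * y / u := by
              gcongr
              nlinarith
      calc Iy ≤ ea * (2 * Real.sqrt ((y + lam) ^ 2 / (2 * (1 - t))) -
            2 * Real.sqrt ((y - lam) ^ 2 / (2 * (1 - t)))) := h1
        _ ≤ ea * (4 * y / u) := by gcongr
        _ = 4 * y * ea / u := by ring
    -- bound on DI
    have hDI : |DI| ≤ 2 * Real.sqrt 2 * ea / u := by
      rw [hDI_def]
      have hTb : Real.exp (-((y + lam) ^ 2 / (2 * (1 - t)))) / Real.sqrt ((y + lam) ^ 2 / (2 * (1 - t)))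
          * ((y + lam) / (1 - t)) = Real.exp (-((y + lam) ^ 2 / (2 * (1 - t)))) * Real.sqrt 2 / u := by
        rw [hsb, ← hu2]
        field_simp
      have hTa : |ea / Real.sqrt ((y - lam) ^ 2 / (2 * (1 - t))) * ((y - lam) / (1 - t))|
          = ea * Real.sqrt 2 / u := by
        rw [abs_mul, abs_div, abs_of_pos hea, abs_of_pos (by rw [hsa]; positivity), hsa, abs_div,
          abs_of_pos hs, ← hu2]
        have : |y - lam| ≠ 0 := abs_ne_zero.mpr h0
        field_simp
      have hbexp : Real.exp (-((y + lam) ^ 2 / (2 * (1 - t)))) ≤ ea := by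
        rw [hea_def]
        exact Real.exp_le_exp.mpr (by linarith)
      calc |_ - _| ≤ |Real.exp (-((y + lam) ^ 2 / (2 * (1 - t)))) / Real.sqrt ((y + lam) ^ 2 / (2 * (1 - t)))
            * ((y + lam) / (1 - t))| + |ea / Real.sqrt ((y - lam) ^ 2 / (2 * (1 - t))) * ((y - lam) / (1 - t))| :=
              abs_sub _ _
        _ = |Real.exp (-((y + lam) ^ 2 / (2 * (1 - t)))) * Real.sqrt 2 / u| + ea * Real.sqrt 2 / u := by
              rw [hTb, hTa]
        _ = Real.exp (-((y + lam) ^ 2 / (2 * (1 - t)))) * Real.sqrt 2 / u + ea * Real.sqrt 2 / u := by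
              rw [abs_of_pos (by positivity)]
        _ ≤ ea * Real.sqrt 2 / u + ea * Real.sqrt 2 / u := by gcongr
        _ = 2 * Real.sqrt 2 * ea / u := by ring
    -- bound on the Phi1 derivative
    have hD1 : |(-(E / (2 * Real.sqrt 2 * y ^ 2)) * Iy + 1 / (2 * Real.sqrt 2 * y) * E * DI)|
        ≤ 3 * E * ea / (y * u) := by
      calc |(-(E / (2 * Real.sqrt 2 * y ^ 2)) * Iy + 1 / (2 * Real.sqrt 2 * y) * E * DI)|
          ≤ |(-(E / (2 * Real.sqrt 2 * y ^ 2)) * Iy)| + |1 / (2 * Real.sqrt 2 * y) * E * DI| := abs_add_le _ _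
        _ = E / (2 * Real.sqrt 2 * y ^ 2) * Iy + 1 / (2 * Real.sqrt 2 * y) * E * |DI| := by
            rw [abs_mul, abs_mul, abs_neg, abs_of_pos (by positivity), abs_of_nonneg hIy0,
              abs_of_pos (by positivity)]
        _ ≤ E / (2 * Real.sqrt 2 * y ^ 2) * (4 * y * ea / u)
            + 1 / (2 * Real.sqrt 2 * y) * E * (2 * Real.sqrt 2 * ea / u) := by gcongr
        _ ≤ E / (2 * 1 * y ^ 2) * (4 * y * ea / u)
            + 1 / (2 * Real.sqrt 2 * y) * E * (2 * Real.sqrt 2 * ea / u) := by gcongr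
        _ = 2 * E * ea / (y * u) + E * ea / (y * u) := by
            field_simp
            ring
        _ = 3 * E * ea / (y * u) := by ring
    -- key arithmetic inequality
    have heb : Real.exp (-(y - lam) ^ 2 / (2 * (1 - t))) = ea := by rw [hea_def, neg_div]
    have key : E * ea * (3 / (y * u) + 1 / (y * u ^ 3) + y / u ^ 5)
        ≤ 8 / ((1 - t) ^ 2 * u) * (1 + lam ^ 2) * (y + 1 / y) * E * ea := by
      rw [← hu2]
      have h4 : u ^ 2 ≤ 1 := by nlinarith
      have h5 : u ^ 4 ≤ 1 := by nlinarith
      have core : 3 / (y * u) + 1 / (y * u ^ 3) + y / u ^ 5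
          ≤ 8 / ((u ^ 2) ^ 2 * u) * (1 + lam ^ 2) * (y + 1 / y) := by
        have hu5 : u ^ 5 ≤ u := by nlinarith [mul_le_mul_of_nonneg_left h5 hu.le]
        have hu53 : u ^ 5 ≤ u ^ 3 := by
          nlinarith [mul_le_mul_of_nonneg_left h4 (by positivity : (0:ℝ) ≤ u ^ 3)]
        have c1 : 3 / (y * u) ≤ 3 / (y * u ^ 5) := by
          apply div_le_div_of_nonneg_left (by norm_num) (by positivity)
          exact mul_le_mul_of_nonneg_left hu5 hy.le
        have c2 : 1 / (y * u ^ 3) ≤ 1 / (y * u ^ 5) := by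
          apply div_le_div_of_nonneg_left (by norm_num) (by positivity)
          exact mul_le_mul_of_nonneg_left hu53 hy.le
        have c3 : 8 / ((u ^ 2) ^ 2 * u) * (1 + lam ^ 2) * (y + 1 / y)
            ≥ 8 / ((u ^ 2) ^ 2 * u) * 1 * (y + 1 / y) := by
          gcongr
          nlinarith [sq_nonneg lam]
        have c4 : 8 / ((u ^ 2) ^ 2 * u) * 1 * (y + 1 / y)
            = 4 / (y * u ^ 5) + 4 * y / u ^ 5 + (4 / (y * u ^ 5) + 4 * y / u ^ 5) := by
          field_simp
          ring
        have c5 : 0 ≤ 4 / (y * u ^ 5) + 3 * y / u ^ 5 := by positivity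
        have c6 : y / u ^ 5 ≤ 4 * y / u ^ 5 := by
          have hp : (0:ℝ) ≤ y / u ^ 5 := by positivity
          have he : 4 * y / u ^ 5 = 4 * (y / u ^ 5) := by ring
          linarith [hp, he.le, he.ge]
        have hpa : (0:ℝ) ≤ 1 / (y * u ^ 5) := by positivity
        have hpb : (0:ℝ) ≤ y / u ^ 5 := by positivity
        have e4 : (4:ℝ) / (y * u ^ 5) = 4 * (1 / (y * u ^ 5)) := by ring
        have e3 : (3:ℝ) / (y * u ^ 5) = 3 * (1 / (y * u ^ 5)) := by ring
        have e44 : (4:ℝ) * y / u ^ 5 = 4 * (y / u ^ 5) := by ring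
        linarith [c1, c2, c3, c4, c6, hpa, hpb, e4.le, e4.ge, e3.le, e3.ge, e44.le, e44.ge]
      calc E * ea * (3 / (y * u) + 1 / (y * u ^ 3) + y / u ^ 5)
          ≤ E * ea * (8 / ((u ^ 2) ^ 2 * u) * (1 + lam ^ 2) * (y + 1 / y)) :=
            mul_le_mul_of_nonneg_left core (by positivity)
        _ = 8 / ((u ^ 2) ^ 2 * u) * (1 + lam ^ 2) * (y + 1 / y) * E * ea := by ring
    rcases hne.lt_or_gt with hlt | hgt
    · -- case y < lam : Phi = Phi1 near y
      have hev : (fun z => Phi lam t z θ) =ᶠ[nhds y] fun z => Phi1 lam t z := by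
        filter_upwards [Iio_mem_nhds hlt, Ioi_mem_nhds hy] with z hz1 hz2
        have hz1' : z < lam := hz1
        have hz2' : (0:ℝ) < z := hz2
        have h2 : Phi2 lam t z ≤ 0 := by
          unfold Phi2
          apply mul_nonpos_of_nonpos_of_nonneg
          · apply mul_nonpos_of_nonpos_of_nonneg
            · apply div_nonpos_of_nonpos_of_nonneg (by linarith) (by positivity)
            · positivity
          · positivity
        show Phi lam t z θ = Phi1 lam t z
        unfold Phi
        rw [max_eq_left h2, mul_zero, add_zero]
      have hD := hPhi1.congr_of_eventuallyEq hev
      refine ⟨hD.differentiableAt, ?_⟩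
      rw [hD.deriv, heb]
      calc |(-(E / (2 * Real.sqrt 2 * y ^ 2)) * Iy + 1 / (2 * Real.sqrt 2 * y) * E * DI)|
          ≤ 3 * E * ea / (y * u) := hD1
        _ ≤ E * ea * (3 / (y * u) + 1 / (y * u ^ 3) + y / u ^ 5) := by
            have h1 : (0:ℝ) ≤ E * ea / (y * u ^ 3) := by positivity
            have h2 : (0:ℝ) ≤ E * ea * y / u ^ 5 := by positivity
            have h3 : E * ea * (3 / (y * u) + 1 / (y * u ^ 3) + y / u ^ 5)
                = 3 * E * ea / (y * u) + E * ea / (y * u ^ 3) + E * ea * y / u ^ 5 := by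
              field_simp
            linarith [h1, h2, h3.le, h3.ge]
        _ ≤ 8 / ((1 - t) ^ 2 * u) * (1 + lam ^ 2) * (y + 1 / y) * E * ea := key
    · -- case lam < y
      set c := Real.sqrt ((1 - t) ^ 3) with hc_def
      have hc : c = u ^ 3 := by
        rw [hc_def, show (1 - t) ^ 3 = (u ^ 3) ^ 2 by rw [← hu2]; ring]
        exact Real.sqrt_sq (by positivity)
      have hc0 : 0 < c := by rw [hc]; positivity
      have hinner : HasDerivAt (fun z : ℝ => -(z - lam) ^ 2 / (2 * (1 - t)))
          (-((y - lam) / (1 - t))) y := by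
        have h := ((((hasDerivAt_id y).sub_const lam).pow 2).neg).div_const (2 * (1 - t))
        refine h.congr_deriv ?_
        simp only [id]
        field_simp
        ring
      have hexp : HasDerivAt (fun z => Real.exp (-(z - lam) ^ 2 / (2 * (1 - t))))
          (Real.exp (-(y - lam) ^ 2 / (2 * (1 - t))) * -((y - lam) / (1 - t))) y := hinner.exp
      have hq : HasDerivAt (fun z : ℝ => (z - lam) / (c * z))
          ((1 * (c * y) - (y - lam) * (c * 1)) / (c * y) ^ 2) y := by
        exact ((hasDerivAt_id y).sub_const lam).div ((hasDerivAt_id y).const_mul c)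
          (by positivity)
      have hPhi2 : HasDerivAt (fun z => Phi2 lam t z)
          ((1 * (c * y) - (y - lam) * (c * 1)) / (c * y) ^ 2 * E *
              Real.exp (-(y - lam) ^ 2 / (2 * (1 - t)))
            + (y - lam) / (c * y) * E *
              (Real.exp (-(y - lam) ^ 2 / (2 * (1 - t))) * -((y - lam) / (1 - t)))) y := by
        unfold Phi2
        exact (hq.mul_const E).mul hexp
      have hV2 : |(1 * (c * y) - (y - lam) * (c * 1)) / (c * y) ^ 2 * E * ea
            + (y - lam) / (c * y) * E * (ea * -((y - lam) / (1 - t)))|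
          ≤ E * ea * (1 / (y * u ^ 3) + y / u ^ 5) := by
        have hq' : (1 * (c * y) - (y - lam) * (c * 1)) / (c * y) ^ 2 = lam / (c * y ^ 2) := by
          field_simp
          ring
        have hBeq : (y - lam) / (c * y) * E * (ea * -((y - lam) / (1 - t)))
            = -((y - lam) ^ 2 * E * ea / (c * y * (1 - t))) := by
          field_simp
        rw [hq', hBeq]
        calc |lam / (c * y ^ 2) * E * ea + -((y - lam) ^ 2 * E * ea / (c * y * (1 - t)))|
            ≤ |lam / (c * y ^ 2) * E * ea| + |-((y - lam) ^ 2 * E * ea / (c * y * (1 - t)))| :=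
              abs_add_le _ _
          _ = lam / (c * y ^ 2) * E * ea + (y - lam) ^ 2 * E * ea / (c * y * (1 - t)) := by
              rw [abs_of_nonneg (by positivity), abs_neg, abs_of_nonneg (by positivity)]
          _ ≤ y / (c * y ^ 2) * E * ea + y ^ 2 * E * ea / (c * y * (1 - t)) := by
              gcongr <;> nlinarith
          _ = E * ea * (1 / (y * u ^ 3) + y / u ^ 5) := by
              rw [hc, ← hu2]
              field_simp
      have hev : (fun z => Phi lam t z θ) =ᶠ[nhds y]
          fun z => Phi1 lam t z + (1 - θ) * Phi2 lam t z := by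
        filter_upwards [Ioi_mem_nhds hgt] with z hz
        have hz' : lam < z := hz
        have hz0 : (0:ℝ) < z := by linarith
        have h2 : 0 ≤ Phi2 lam t z := by
          unfold Phi2
          apply mul_nonneg (mul_nonneg ?_ (Real.exp_pos _).le) (Real.exp_pos _).le
          apply div_nonneg (by linarith) (by positivity)
        show Phi lam t z θ = _
        unfold Phi
        rw [max_eq_right h2]
      have hD' := (hPhi1.add (hPhi2.const_mul (1 - θ))).congr_of_eventuallyEq hev
      refine ⟨hD'.differentiableAt, ?_⟩
      rw [hD'.deriv, heb]
      have hθ1 : 0 ≤ 1 - θ := by linarith [hθ.2, ht.2]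
      have hθ2 : 1 - θ ≤ 1 := by linarith [hθ.1]
      have habs2 : ∀ x v w : ℝ, 0 ≤ w → |x + w * v| ≤ |x| + w * |v| := by
        intro x v w hw
        refine (abs_add_le _ _).trans ?_
        rw [abs_mul, abs_of_nonneg hw]
      calc |(-(E / (2 * Real.sqrt 2 * y ^ 2)) * Iy + 1 / (2 * Real.sqrt 2 * y) * E * DI)
            + (1 - θ) * ((1 * (c * y) - (y - lam) * (c * 1)) / (c * y) ^ 2 * E * ea
              + (y - lam) / (c * y) * E * (ea * -((y - lam) / (1 - t))))|
          ≤ |(-(E / (2 * Real.sqrt 2 * y ^ 2)) * Iy + 1 / (2 * Real.sqrt 2 * y) * E * DI)|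
            + (1 - θ) * |(1 * (c * y) - (y - lam) * (c * 1)) / (c * y) ^ 2 * E * ea
              + (y - lam) / (c * y) * E * (ea * -((y - lam) / (1 - t)))| :=
            habs2 _ _ _ hθ1
        _ ≤ 3 * E * ea / (y * u) + 1 * (E * ea * (1 / (y * u ^ 3) + y / u ^ 5)) := by
            gcongr
        _ ≤ E * ea * (3 / (y * u) + 1 / (y * u ^ 3) + y / u ^ 5) := by
            rw [one_mul]
            have h1 : E * ea * (3 / (y * u) + 1 / (y * u ^ 3) + y / u ^ 5)
                = 3 * E * ea / (y * u) + E * ea * (1 / (y * u ^ 3) + y / u ^ 5) := by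
              field_simp
              ring
            linarith [h1.le, h1.ge]
        _ ≤ 8 / ((1 - t) ^ 2 * u) * (1 + lam ^ 2) * (y + 1 / y) * E * ea := key
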